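/- Let f : (0,∞) → (0,∞) be differentiable and strictly convex with x ↦ ln|f'(x)| strictly convex and f strictly decreasing. For a > 0, b, c ∈ ℝ, let ǧ(x) = a·f(x+b) + c − f(x). If ǧ has exactly one root x₀ and ǧ'(x₀) = 0, then ǧ does not change sign at x₀ (x₀ is a local extremum of ǧ). -/

import Mathlib

open Filter Set Real

lemma slope4 {L : ℝ → ℝ} {s : Set ℝ} (hL : StrictConvexOn ℝ s L)
    {u v w z : ℝ} (hu : u ∈ s) (hv : v ∈ s) (hw : w ∈ s) (hz : z ∈ s)
    (huv : u < v) (huw : u < w) (hvz : v < z) (hwz : w < z) :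
    (L v - L u) / (v - u) < (L z - L w) / (z - w) := by
  have h1 := hL.secant_strict_mono hu hv hz huv.ne' (huv.trans hvz).ne' hvz
  have h2 := hL.secant_strict_mono hz hu hw (huv.trans hvz).ne hwz.ne huw
  have e1 : (L u - L z) / (u - z) = (L z - L u) / (z - u) := by
    rw [← neg_div_neg_eq]; ring_nf
  have e2 : (L w - L z) / (w - z) = (L z - L w) / (z - w) := by
    rw [← neg_div_neg_eq]; ring_nf
  rw [e1, e2] at h2
  linarith

lemma auxmax {g : ℝ → ℝ} {m x₀ : ℝ} (hx₀ : x₀ ∈ Set.Ioi m)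
    (hgd : ∀ x ∈ Set.Ioi m, DifferentiableAt ℝ g x)
    (hP : ∀ x ∈ Set.Ioi m, x < x₀ → 0 < deriv g x)
    (hN : ∀ x ∈ Set.Ioi m, x₀ < x → deriv g x < 0)
    (h0 : g x₀ = 0) :
    ∀ x ∈ Set.Ioi m, x ≠ x₀ → g x < 0 := by
  have hx₀' : m < x₀ := hx₀
  have mono : StrictMonoOn g (Set.Ioc m x₀) := by
    apply strictMonoOn_of_deriv_pos (convex_Ioc m x₀)
    · exact fun x hx => (hgd x hx.1).continuousAt.continuousWithinAt
    · intro x hx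
      rw [interior_Ioc] at hx
      exact hP x hx.1 hx.2
  have anti : StrictAntiOn g (Set.Ici x₀) := by
    apply strictAntiOn_of_deriv_neg (convex_Ici x₀)
    · exact fun x hx => (hgd x (lt_of_lt_of_le hx₀' hx)).continuousAt.continuousWithinAt
    · intro x hx
      rw [interior_Ici] at hx
      exact hN x (hx₀'.trans hx) hx
  intro x hx hne
  rcases lt_or_gt_of_ne hne with h | h
  · have := mono ⟨hx, h.le⟩ ⟨hx₀', le_refl x₀⟩ h
    linarith
  · have := anti Set.self_mem_Ici h.le h
    linarith

theorem stmt19 (f : ℝ → ℝ)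
    (hpos : ∀ x ∈ Set.Ioi (0:ℝ), 0 < f x)
    (hdiff : ∀ x ∈ Set.Ioi (0:ℝ), DifferentiableAt ℝ f x)
    (hconv : StrictConvexOn ℝ (Set.Ioi 0) f)
    (hlog : StrictConvexOn ℝ (Set.Ioi 0) (fun x => Real.log |deriv f x|))
    (hanti : StrictAntiOn f (Set.Ioi 0))
    (a b c : ℝ) (ha : 0 < a) (x₀ : ℝ) (hx₀ : x₀ ∈ Set.Ioi (max (-b) 0))
    (hroot : a * f (x₀ + b) + c - f x₀ = 0)
    (huniq : ∀ x ∈ Set.Ioi (max (-b) 0), a * f (x + b) + c - f x = 0 → x = x₀)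
    (hderiv : deriv (fun x => a * f (x + b) + c - f x) x₀ = 0) :
    ∃ ε > (0:ℝ),
      (∀ x ∈ Set.Ioi (max (-b) 0), x ≠ x₀ → |x - x₀| < ε → 0 < a * f (x + b) + c - f x) ∨
      (∀ x ∈ Set.Ioi (max (-b) 0), x ≠ x₀ → |x - x₀| < ε → a * f (x + b) + c - f x < 0) := by
  set m := max (-b) 0 with hm
  set g : ℝ → ℝ := fun x => a * f (x + b) + c - f x with hgdef
  have hmem1 : ∀ x ∈ Set.Ioi m, x ∈ Set.Ioi (0:ℝ) := by
    intro x hx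
    exact lt_of_le_of_lt (le_max_right (-b) 0) hx
  have hmem2 : ∀ x ∈ Set.Ioi m, x + b ∈ Set.Ioi (0:ℝ) := by
    intro x hx
    have : -b < x := lt_of_le_of_lt (le_max_left (-b) 0) hx
    simp only [Set.mem_Ioi]
    linarith
  have hx0pos : x₀ ∈ Set.Ioi (0:ℝ) := hmem1 x₀ hx₀
  have hx0bpos : x₀ + b ∈ Set.Ioi (0:ℝ) := hmem2 x₀ hx₀
  -- f' < 0 on Ioi 0
  have hfneg : ∀ x ∈ Set.Ioi (0:ℝ), deriv f x < 0 := by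
    intro x hx
    have hx' : (0:ℝ) < x := hx
    have hy : x + 1 ∈ Set.Ioi (0:ℝ) := by simp only [Set.mem_Ioi]; linarith
    have hxy : x < x + 1 := by linarith
    have h1 := hconv.deriv_lt_slope hx hy hxy (hdiff x hx)
    have h2 : f (x + 1) < f x := hanti hx hy hxy
    have h3 : slope f x (x + 1) < 0 := by
      rw [slope_def_field]
      apply div_neg_of_neg_of_pos <;> linarith
    linarith
  -- derivative of g
  have hgd : ∀ x ∈ Set.Ioi m, HasDerivAt g (a * deriv f (x + b) - deriv f x) x := by
    intro x hx
    have h1 : HasDerivAt (fun y => f (y + b)) (deriv f (x + b)) x :=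
      HasDerivAt.comp_add_const x b ((hdiff _ (hmem2 x hx)).hasDerivAt)
    exact ((h1.const_mul a).add_const c).sub (hdiff x (hmem1 x hx)).hasDerivAt
  have hgdiff : ∀ x ∈ Set.Ioi m, DifferentiableAt ℝ g x :=
    fun x hx => (hgd x hx).differentiableAt
  have hgderiv : ∀ x ∈ Set.Ioi m, deriv g x = a * deriv f (x + b) - deriv f x :=
    fun x hx => (hgd x hx).deriv
  -- the derivative condition
  have hkey : a * deriv f (x₀ + b) = deriv f x₀ := by
    have := hgderiv x₀ hx₀
    rw [hderiv] at this
    linarith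
  -- b ≠ 0
  have hb : b ≠ 0 := by
    intro hb0
    subst hb0
    have hfx := hfneg x₀ hx0pos
    have ha1 : a = 1 := by
      rw [add_zero] at hkey
      rcases mul_eq_mul_right_iff.mp (by linarith : a * deriv f x₀ = 1 * deriv f x₀) with h | h
      · exact h
      · exact absurd h (ne_of_lt hfx)
    have hc : c = 0 := by
      rw [add_zero, ha1, one_mul] at hroot
      linarith
    have := huniq (x₀ + 1) (by simp only [Set.mem_Ioi] at hx₀ ⊢; linarith)
      (by rw [add_zero, ha1, one_mul, hc]; ring)
    linarith
  -- positivity of |f'|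
  have habs : ∀ x ∈ Set.Ioi (0:ℝ), 0 < |deriv f x| :=
    fun x hx => abs_pos.mpr (ne_of_lt (hfneg x hx))
  set L : ℝ → ℝ := fun x => Real.log |deriv f x| with hL
  set hfun : ℝ → ℝ := fun x => Real.log a + L (x + b) - L x with hh
  -- h x₀ = 0
  have hmul : ∀ x ∈ Set.Ioi m, Real.log (a * |deriv f (x + b)|) = Real.log a + L (x + b) := by
    intro x hx
    rw [Real.log_mul (ne_of_gt ha) (ne_of_gt (habs _ (hmem2 x hx)))]
  have h0 : hfun x₀ = 0 := by
    have e1 : a * |deriv f (x₀ + b)| = |deriv f x₀| := by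
      rw [abs_of_neg (hfneg _ hx0bpos), abs_of_neg (hfneg _ hx0pos)]
      linarith [hkey]
    have := hmul x₀ hx₀
    rw [e1] at this
    simp only [hh]
    linarith [this]
  -- sign of deriv g from sign of hfun
  have hsignP : ∀ x ∈ Set.Ioi m, hfun x < 0 → 0 < deriv g x := by
    intro x hx hneg
    have h1 : Real.log (a * |deriv f (x + b)|) < Real.log |deriv f x| := by
      rw [hmul x hx]
      simp only [hh] at hneg
      linarith
    have h2 : a * |deriv f (x + b)| < |deriv f x| :=
      (Real.log_lt_log_iff (mul_pos ha (habs _ (hmem2 x hx))) (habs _ (hmem1 x hx))).mp h1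
    rw [hgderiv x hx]
    rw [abs_of_neg (hfneg _ (hmem2 x hx)), abs_of_neg (hfneg _ (hmem1 x hx))] at h2
    linarith
  have hsignN : ∀ x ∈ Set.Ioi m, 0 < hfun x → deriv g x < 0 := by
    intro x hx hpos'
    have h1 : Real.log |deriv f x| < Real.log (a * |deriv f (x + b)|) := by
      rw [hmul x hx]
      simp only [hh] at hpos'
      linarith
    have h2 : |deriv f x| < a * |deriv f (x + b)| :=
      (Real.log_lt_log_iff (habs _ (hmem1 x hx)) (mul_pos ha (habs _ (hmem2 x hx)))).mp h1
    rw [hgderiv x hx]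
    rw [abs_of_neg (hfneg _ (hmem2 x hx)), abs_of_neg (hfneg _ (hmem1 x hx))] at h2
    linarith
  rcases lt_or_gt_of_ne hb with hbneg | hbpos
  · -- b < 0 : hfun strictly decreasing, x₀ is a strict local min, g > 0 away from x₀
    have hmono : ∀ x ∈ Set.Ioi m, ∀ y ∈ Set.Ioi m, x < y → hfun y < hfun x := by
      intro x hx y hy hxy
      have hs := slope4 hlog (hmem2 x hx) (hmem1 x hx) (hmem2 y hy) (hmem1 y hy)
        (by linarith) (by linarith) hxy (by linarith)
      have e1 : x - (x + b) = -b := by ring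
      have e2 : y - (y + b) = -b := by ring
      rw [e1, e2] at hs
      have := (div_lt_div_iff_of_pos_right (by linarith : (0:ℝ) < -b)).mp hs
      simp only [hh]
      linarith
    refine ⟨1, one_pos, Or.inl ?_⟩
    intro x hx hne _
    have := auxmax (g := fun x => -g x) hx₀
      (fun x hx => (hgdiff x hx).neg)
      (fun x hx hlt => by
        rw [deriv.fun_neg]
        have := hsignN x hx (by rw [← h0]; exact hmono x hx x₀ hx₀ hlt)
        linarith)
      (fun x hx hlt => by
        rw [deriv.fun_neg]
        have := hsignP x hx (by rw [← h0] at *; have := hmono x₀ hx₀ x hx hlt; linarith)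
        linarith)
      (by simp only [hgdef]; linarith [hroot])
      x hx hne
    have h2 : -g x < 0 := this
    show 0 < g x
    linarith
  · -- b > 0 : hfun strictly increasing, x₀ is a strict local max, g < 0 away from x₀
    have hmono : ∀ x ∈ Set.Ioi m, ∀ y ∈ Set.Ioi m, x < y → hfun x < hfun y := by
      intro x hx y hy hxy
      have hs := slope4 hlog (hmem1 x hx) (hmem2 x hx) (hmem1 y hy) (hmem2 y hy)
        (by linarith) hxy (by linarith) (by linarith)
      have e1 : x + b - x = b := by ring
      have e2 : y + b - y = b := by ring
      rw [e1, e2] at hs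
      have := (div_lt_div_iff_of_pos_right hbpos).mp hs
      simp only [hh]
      linarith
    refine ⟨1, one_pos, Or.inr ?_⟩
    intro x hx hne _
    exact auxmax hx₀ hgdiff
      (fun x hx hlt => hsignP x hx (by rw [← h0] at *; exact hmono x hx x₀ hx₀ hlt))
      (fun x hx hlt => hsignN x hx (by rw [← h0] at *; exact hmono x₀ hx₀ x hx hlt))
      hroot x hx hne
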